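/- Let X be a zero-dimensional topological space (i.e., a space with a basis of clopen sets). If μ and ν are continuous valuations on X with total mass μ(X) = ν(X) = 1 and μ(U) ≤ ν(U) for all open sets U, then μ = ν. In other words, the pointwise order on probability valuations over a zero-dimensional space is discrete. -/

import Mathlib

open scoped ENNReal

/-- A continuous valuation on a topological space. -/
structure ContVal (X : Type) [TopologicalSpace X] where
  toFun : Set X → ℝ≥0∞
  empty' : toFun ∅ = 0
  mono' : ∀ U V : Set X, IsOpen U → IsOpen V → U ⊆ V → toFun U ≤ toFun V
  modular' : ∀ U V : Set X, IsOpen U → IsOpen V →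
    toFun U + toFun V = toFun (U ∪ V) + toFun (U ∩ V)
  cont' : ∀ (ι : Type) (U : ι → Set X), (∀ i, IsOpen (U i)) →
    Directed (· ⊆ ·) U → toFun (⋃ i, U i) = ⨆ i, toFun (U i)

/-- On a zero-dimensional space, the pointwise order on probability valuations is discrete. -/
theorem stmt0 {X : Type} [TopologicalSpace X]
    (hzd : ∃ B : Set (Set X), TopologicalSpace.IsTopologicalBasis B ∧ ∀ U ∈ B, IsClopen U)
    (μ ν : ContVal X) (hμ : μ.toFun Set.univ = 1) (hν : ν.toFun Set.univ = 1)
    (hle : ∀ U : Set X, IsOpen U → μ.toFun U ≤ ν.toFun U) :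
    ∀ U : Set X, IsOpen U → μ.toFun U = ν.toFun U := by
  obtain ⟨B, hB, hBcl⟩ := hzd
  -- Equality on clopen sets
  have hclopen : ∀ V : Set X, IsClopen V → μ.toFun V = ν.toFun V := by
    intro V hV
    have hVo := hV.isOpen
    have hVc : IsOpen Vᶜ := hV.compl.isOpen
    have hμsum : μ.toFun V + μ.toFun Vᶜ = 1 := by
      have := μ.modular' V Vᶜ hVo hVc
      rw [Set.union_compl_self, Set.inter_compl_self, hμ, μ.empty', add_zero] at this
      exact this
    have hνsum : ν.toFun V + ν.toFun Vᶜ = 1 := by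
      have := ν.modular' V Vᶜ hVo hVc
      rw [Set.union_compl_self, Set.inter_compl_self, hν, ν.empty', add_zero] at this
      exact this
    refine le_antisymm (hle V hVo) ?_
    have h1 : ν.toFun V + ν.toFun Vᶜ ≤ μ.toFun V + ν.toFun Vᶜ := by
      rw [hνsum, ← hμsum]
      exact add_le_add le_rfl (hle Vᶜ hVc)
    have hfin : ν.toFun Vᶜ ≠ ⊤ := by
      intro h
      rw [h, add_top] at hνsum
      exact ENNReal.top_ne_one hνsum
    exact ENNReal.le_of_add_le_add_right hfin h1
  intro U hU
  set ι := {V : Set X // IsClopen V ∧ V ⊆ U}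
  have hcov : U = ⋃ i : ι, (i : Set X) := by
    apply Set.Subset.antisymm
    · intro x hx
      obtain ⟨V, hVB, hxV, hVU⟩ := hB.exists_subset_of_mem_open hx hU
      exact Set.mem_iUnion.2 ⟨⟨V, hBcl V hVB, hVU⟩, hxV⟩
    · exact Set.iUnion_subset fun i => i.2.2
  have hopen : ∀ i : ι, IsOpen (i : Set X) := fun i => i.2.1.isOpen
  have hdir : Directed (· ⊆ ·) (fun i : ι => (i : Set X)) := by
    intro i j
    exact ⟨⟨i.1 ∪ j.1, i.2.1.union j.2.1, Set.union_subset i.2.2 j.2.2⟩,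
      Set.subset_union_left, Set.subset_union_right⟩
  have hμU := μ.cont' ι (fun i => (i : Set X)) hopen hdir
  have hνU := ν.cont' ι (fun i => (i : Set X)) hopen hdir
  rw [hcov, hμU, hνU]
  exact iSup_congr fun i => hclopen i.1 i.2.1
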